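/- Let U ⊆ ℝ² be an open connected set, and let C₁, …, C_r be subsets of U, each closed in the subspace topology of U, whose union is U, and such that C_i ∩ C_j is finite whenever i ≠ j. Then C_j = U for some j. -/

import Mathlib

open Set Metric


lemma fst_lin : IsLinearMap ℝ (Prod.fst : ℝ × ℝ → ℝ) := ⟨fun _ _ => rfl, fun _ _ => rfl⟩
lemma snd_lin : IsLinearMap ℝ (Prod.snd : ℝ × ℝ → ℝ) := ⟨fun _ _ => rfl, fun _ _ => rfl⟩

lemma punctured_ball_preconnected (x : ℝ × ℝ) {ε : ℝ} (hε : 0 < ε) :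
    IsPreconnected (Metric.ball x ε \ {x}) := by
  set A := Metric.ball x ε ∩ {p : ℝ × ℝ | x.1 < p.1} with hA
  set B := Metric.ball x ε ∩ {p : ℝ × ℝ | x.2 < p.2} with hB
  set Cs := Metric.ball x ε ∩ {p : ℝ × ℝ | p.1 < x.1} with hC
  set D := Metric.ball x ε ∩ {p : ℝ × ℝ | p.2 < x.2} with hD
  have hAc : Convex ℝ A := (convex_ball x ε).inter (convex_halfSpace_gt fst_lin _)
  have hBc : Convex ℝ B := (convex_ball x ε).inter (convex_halfSpace_gt snd_lin _)
  have hCc : Convex ℝ Cs := (convex_ball x ε).inter (convex_halfSpace_lt fst_lin _)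
  have hDc : Convex ℝ D := (convex_ball x ε).inter (convex_halfSpace_lt snd_lin _)
  have hball : ∀ a b : ℝ, |a| < ε → |b| < ε → (x.1 + a, x.2 + b) ∈ Metric.ball x ε := by
    intro a b ha hb
    simp [Metric.mem_ball, Prod.dist_eq, Real.dist_eq, abs_lt] at *
    constructor <;> constructor <;> linarith [ha.1, ha.2, hb.1, hb.2]
  have hεabs : |ε/2| < ε := by rw [abs_of_pos (by linarith)]; linarith
  have hεabs' : |-(ε/2)| < ε := by rw [abs_neg]; exact hεabs
  have p1A : (x.1 + ε/2, x.2 + ε/2) ∈ A := ⟨hball _ _ hεabs hεabs, by simp; linarith⟩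
  have p1B : (x.1 + ε/2, x.2 + ε/2) ∈ B := ⟨hball _ _ hεabs hεabs, by simp; linarith⟩
  have p2B : (x.1 + -(ε/2), x.2 + ε/2) ∈ B := ⟨hball _ _ hεabs' hεabs, by simp; linarith⟩
  have p2C : (x.1 + -(ε/2), x.2 + ε/2) ∈ Cs := ⟨hball _ _ hεabs' hεabs, by simp; linarith⟩
  have p3A : (x.1 + ε/2, x.2 + -(ε/2)) ∈ A := ⟨hball _ _ hεabs hεabs', by simp; linarith⟩
  have p3D : (x.1 + ε/2, x.2 + -(ε/2)) ∈ D := ⟨hball _ _ hεabs hεabs', by simp; linarith⟩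
  have hAB : IsPreconnected (A ∪ B) :=
    hAc.isPreconnected.union _ p1A p1B hBc.isPreconnected
  have hABC : IsPreconnected (A ∪ B ∪ Cs) :=
    hAB.union _ (Or.inr p2B) p2C hCc.isPreconnected
  have hABCD : IsPreconnected (A ∪ B ∪ Cs ∪ D) :=
    hABC.union _ (Or.inl (Or.inl p3A)) p3D hDc.isPreconnected
  have heq : Metric.ball x ε \ {x} = A ∪ B ∪ Cs ∪ D := by
    ext p
    simp only [mem_diff, mem_singleton_iff, mem_union, hA, hB, hC, hD, mem_inter_iff,
      mem_setOf_eq]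
    constructor
    · rintro ⟨hb, hne⟩
      rcases lt_trichotomy x.1 p.1 with h | h | h
      · exact Or.inl (Or.inl (Or.inl ⟨hb, h⟩))
      · rcases lt_trichotomy x.2 p.2 with h2 | h2 | h2
        · exact Or.inl (Or.inl (Or.inr ⟨hb, h2⟩))
        · exact absurd (Prod.ext h.symm h2.symm) hne
        · exact Or.inr ⟨hb, h2⟩
      · exact Or.inl (Or.inr ⟨hb, h⟩)
    · rintro ((((⟨hb, h⟩ | ⟨hb, h⟩) | ⟨hb, h⟩) | ⟨hb, h⟩)) <;>
        exact ⟨hb, fun he => by rw [he] at h; exact lt_irrefl _ h⟩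
  rw [heq]
  exact hABCD


lemma mem_closure_punctured_ball (x : ℝ × ℝ) {ε : ℝ} (hε : 0 < ε) :
    x ∈ closure (Metric.ball x ε \ {x}) := by
  rw [mem_closure_iff_nhdsWithin_neBot]
  have h : Metric.ball x ε \ {x} = {x}ᶜ ∩ Metric.ball x ε := by
    ext p; simp [mem_diff, and_comm]
  rw [h, inter_comm, nhdsWithin_inter_of_mem (mem_nhdsWithin_of_mem_nhds (Metric.ball_mem_nhds x hε))]
  exact Real.punctured_nhds_module_neBot x

-- auxiliary asymmetric step
lemma aux_step (U : Set (ℝ × ℝ)) (hUpre : IsPreconnected U) (x : ℝ × ℝ) (hx : x ∈ U)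
    {ε : ℝ} (hε : 0 < ε) (hball : Metric.ball x ε ⊆ U)
    (u v : Set (ℝ × ℝ)) (hu : IsOpen u) (hv : IsOpen v)
    (hcov : U \ {x} ⊆ u ∪ v) (hb : ((U \ {x}) ∩ v).Nonempty)
    (hPu : Metric.ball x ε \ {x} ⊆ u)
    (hempty : (U \ {x}) ∩ (u ∩ v) = ∅) : False := by
  have hcov' : U ⊆ (u ∪ Metric.ball x ε) ∪ v := by
    intro y hy
    by_cases hyx : y = x
    · exact Or.inl (Or.inr (hyx ▸ Metric.mem_ball_self hε))
    · rcases hcov ⟨hy, hyx⟩ with h | h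
      · exact Or.inl (Or.inl h)
      · exact Or.inr h
  have ha : (U ∩ (u ∪ Metric.ball x ε)).Nonempty := ⟨x, hx, Or.inr (Metric.mem_ball_self hε)⟩
  have hb' : (U ∩ v).Nonempty := hb.mono (by intro y ⟨⟨h1, _⟩, h2⟩; exact ⟨h1, h2⟩)
  obtain ⟨z, hzU, hzuv⟩ := hUpre (u ∪ Metric.ball x ε) v (hu.union Metric.isOpen_ball) hv
    hcov' ha hb'
  obtain ⟨hz1, hz2⟩ := hzuv
  -- get a point in (U \ {x}) ∩ u ∩ v
  by_cases hzx : z = x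
  · -- x ∈ v, v open: find point of punctured ball in v
    subst hzx
    have : ((v ∩ Metric.ball z ε) ∩ (Metric.ball z ε \ {z})).Nonempty := by
      have hcl := mem_closure_punctured_ball z hε
      rw [_root_.mem_closure_iff] at hcl
      exact hcl _ (hv.inter Metric.isOpen_ball) ⟨hz2, Metric.mem_ball_self hε⟩
    obtain ⟨w, ⟨hwv, _⟩, hwP⟩ := this
    have : w ∈ (U \ {z}) ∩ (u ∩ v) :=
      ⟨⟨hball hwP.1, hwP.2⟩, hPu hwP, hwv⟩
    rw [hempty] at this; exact this
  · have hzu : z ∈ u := by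
      rcases hz1 with h | h
      · exact h
      · exact hPu ⟨h, hzx⟩
    have : z ∈ (U \ {x}) ∩ (u ∩ v) := ⟨⟨hzU, hzx⟩, hzu, hz2⟩
    rw [hempty] at this; exact this

lemma preconn_diff_singleton {U : Set (ℝ × ℝ)} (hU : IsOpen U) (hUpre : IsPreconnected U)
    (x : ℝ × ℝ) : IsPreconnected (U \ {x}) := by
  by_cases hx : x ∈ U
  swap
  · have : U \ {x} = U := by
      ext p; simp only [mem_diff, mem_singleton_iff, and_iff_left_iff_imp]
      rintro hp rfl; exact hx hp
    rw [this]; exact hUpre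
  obtain ⟨ε, hε, hball⟩ := Metric.isOpen_iff.1 hU x hx
  intro u v hu hv hcov ha hb
  by_contra hne
  rw [Set.not_nonempty_iff_eq_empty] at hne
  have hP : IsPreconnected (Metric.ball x ε \ {x}) := punctured_ball_preconnected x hε
  have hPsub : Metric.ball x ε \ {x} ⊆ U \ {x} := fun y hy => ⟨hball hy.1, hy.2⟩
  have hPcov : Metric.ball x ε \ {x} ⊆ u ∪ v := fun y hy => hcov (hPsub hy)
  -- P ⊆ u or P ⊆ v
  have hPuv : Metric.ball x ε \ {x} ⊆ u ∨ Metric.ball x ε \ {x} ⊆ v := by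
    by_contra hcon
    push_neg at hcon
    obtain ⟨y1, hy1, hy1u⟩ := not_subset.1 hcon.1
    obtain ⟨y2, hy2, hy2v⟩ := not_subset.1 hcon.2
    have h1 : ((Metric.ball x ε \ {x}) ∩ u).Nonempty := by
      rcases hPcov hy2 with h | h
      · exact ⟨y2, hy2, h⟩
      · exact absurd h hy2v
    have h2 : ((Metric.ball x ε \ {x}) ∩ v).Nonempty := by
      rcases hPcov hy1 with h | h
      · exact absurd h hy1u
      · exact ⟨y1, hy1, h⟩
    obtain ⟨w, hwP, hwu, hwv⟩ := hP u v hu hv hPcov h1 h2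
    have : w ∈ (U \ {x}) ∩ (u ∩ v) := ⟨hPsub hwP, hwu, hwv⟩
    rw [hne] at this; exact this
  rcases hPuv with hPu | hPv
  · exact aux_step U hUpre x hx hε hball u v hu hv hcov hb hPu hne
  · have hcov' : U \ {x} ⊆ v ∪ u := by rw [union_comm]; exact hcov
    have hne' : (U \ {x}) ∩ (v ∩ u) = ∅ := by rw [inter_comm v u]; exact hne
    exact aux_step U hUpre x hx hε hball v u hv hu hcov' ha hPv hne'


lemma preconn_diff_finite {F : Set (ℝ × ℝ)} (hF : F.Finite) :
    ∀ U : Set (ℝ × ℝ), IsOpen U → IsPreconnected U → IsPreconnected (U \ F) := by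
  refine Set.Finite.induction_on F hF (fun U _ hpre => by simpa using hpre) ?_
  intro a s _ hs ih U hU hpre
  have h2 : U \ insert a s = (U \ {a}) \ s := by
    rw [diff_diff, ← Set.insert_eq]
  rw [h2]
  exact ih _ (hU.sdiff isClosed_singleton) (preconn_diff_singleton hU hpre a)

lemma dense_diff_finite {U F : Set (ℝ × ℝ)} (hU : IsOpen U) (hF : F.Finite) :
    U ⊆ closure (U \ F) := by
  intro y hy
  rw [_root_.mem_closure_iff]
  intro o ho hyo
  have hinf : (o ∩ U).Infinite :=
    infinite_of_mem_nhds y ((ho.inter hU).mem_nhds ⟨hyo, hy⟩)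
  obtain ⟨z, hz1, hz2⟩ := (hinf.diff hF).nonempty
  exact ⟨z, hz1.1, hz1.2, hz2⟩



theorem stmt18 (U : Set (ℝ × ℝ)) (hU : IsOpen U) (hconn : IsConnected U)
    (r : ℕ) (C : Fin r → Set (ℝ × ℝ))
    (hsub : ∀ i, C i ⊆ U)
    (hclosed : ∀ i, IsClosed {x : U | (x : ℝ × ℝ) ∈ C i})
    (hunion : (⋃ i, C i) = U)
    (hfin : ∀ i j, i ≠ j → (C i ∩ C j).Finite) :
    ∃ j, C j = U := by
  classical
  -- extract closed sets T i with C i = U ∩ T i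
  have hT : ∀ i, ∃ T : Set (ℝ × ℝ), IsClosed T ∧ C i = U ∩ T := by
    intro i
    obtain ⟨T, hTcl, hTpre⟩ := isClosed_induced_iff.1 (hclosed i)
    refine ⟨T, hTcl, ?_⟩
    ext y
    constructor
    · intro hy
      have hyU : y ∈ U := hsub i hy
      have : (⟨y, hyU⟩ : U) ∈ {x : U | (x : ℝ × ℝ) ∈ C i} := hy
      rw [← hTpre] at this
      exact ⟨hyU, this⟩
    · rintro ⟨hyU, hyT⟩
      have : (⟨y, hyU⟩ : U) ∈ Subtype.val ⁻¹' T := hyT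
      rw [hTpre] at this
      exact this
  choose T hTcl hCT using hT
  -- the finite exceptional set
  set F : Set (ℝ × ℝ) := ⋃ i, ⋃ j, ⋃ (_ : i ≠ j), (C i ∩ C j) with hF
  have hFfin : F.Finite :=
    Set.finite_iUnion fun i => Set.finite_iUnion fun j => Set.finite_iUnion fun hij =>
      hfin i j hij
  set V : Set (ℝ × ℝ) := U \ F with hV
  have hVpre : IsPreconnected V := preconn_diff_finite hFfin U hU hconn.isPreconnected
  -- V is nonempty
  obtain ⟨u0, hu0⟩ := hconn.nonempty
  have hUinf : U.Infinite := infinite_of_mem_nhds u0 (hU.mem_nhds hu0)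
  obtain ⟨v, hvV⟩ := (hUinf.diff hFfin).nonempty
  have hvU : v ∈ U := hvV.1
  obtain ⟨j, hvj⟩ : ∃ j, v ∈ C j := by
    rw [← hunion] at hvU; exact mem_iUnion.1 hvU
  -- the big closed set
  set W : Set (ℝ × ℝ) := ⋃ i, ⋃ (_ : i ≠ j), T i with hW
  have hWcl : IsClosed W := isClosed_iUnion_of_finite fun i =>
    isClosed_iUnion_of_finite fun _ => hTcl i
  have hcov : V ⊆ T j ∪ W := by
    intro y hy
    have hyU : y ∈ U := hy.1
    obtain ⟨i, hyi⟩ : ∃ i, y ∈ C i := by rw [← hunion] at hyU; exact mem_iUnion.1 hyU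
    by_cases hij : i = j
    · subst hij; exact Or.inl ((hCT i ▸ hyi).2)
    · exact Or.inr (mem_iUnion.2 ⟨i, mem_iUnion.2 ⟨hij, ((hCT i) ▸ hyi).2⟩⟩)
  have hnotW : ¬ (V ∩ W).Nonempty := by
    intro hW2
    obtain ⟨z, hzV, hzTj, hzW⟩ := isPreconnected_closed_iff.1 hVpre (T j) W (hTcl j) hWcl
      hcov ⟨v, hvV, ((hCT j) ▸ hvj).2⟩ hW2
    obtain ⟨i, hi⟩ := mem_iUnion.1 hzW
    obtain ⟨hij, hzTi⟩ := mem_iUnion.1 hi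
    have hzCi : z ∈ C i := (hCT i).symm ▸ ⟨hzV.1, hzTi⟩
    have hzCj : z ∈ C j := (hCT j).symm ▸ ⟨hzV.1, hzTj⟩
    exact hzV.2 (mem_iUnion.2 ⟨i, mem_iUnion.2 ⟨j, mem_iUnion.2 ⟨hij, hzCi, hzCj⟩⟩⟩)
  have hVTj : V ⊆ T j := by
    intro y hy
    rcases hcov hy with h | h
    · exact h
    · exact absurd ⟨y, hy, h⟩ hnotW
  refine ⟨j, subset_antisymm (hsub j) ?_⟩
  intro y hy
  rw [hCT j]
  refine ⟨hy, ?_⟩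
  have : y ∈ closure V := dense_diff_finite hU hFfin hy
  exact (hTcl j).closure_subset ((closure_mono hVTj) this)
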